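/- For every b ≥ 1, the partition (b, b) of 2b satisfies |η_{(b,b)}| ≤ D_{b+1} + (b−1)·D_b. Moreover, for every b ≥ 4, |η_{(b,b)}| ≤ D_{b+1} + (b−3)·D_b, with equality if and only if b = 4. -/

import Mathlib

/-- Derangement numbers: `D 0 = 1`, `D (m+1) = (m+1) * D m + (-1)^(m+1)`. -/
def derange : ℕ → ℤ
  | 0 => 1
  | n + 1 => (n + 1 : ℤ) * derange n + (-1) ^ (n + 1)

/-- Subtract one from every part and discard the parts that become zero
(deleting the first column of the Ferrers diagram). -/
def strip (l : List ℕ) : List ℕ := (l.map (· - 1)).filter (fun x => 0 < x)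

lemma strip_measure (l : List ℕ) : (strip l).sum + (strip l).length ≤ l.sum := by
  induction l with
  | nil => simp [strip]
  | cons x t ih =>
      simp only [strip, List.map_cons, List.filter_cons] at ih ⊢
      by_cases hx : 0 < x - 1 <;> simp [hx] <;> omega

/-- The eigenvalues of the derangement graph, defined by Renteln's recurrence:
`η ∅ = 1` and `η λ = (-1)^h (η (λ-ĥ) + (-1)^{λ₁} h η (λ-ĉ))`, where
`h = λ₁ + r - 1` is the hook size, `λ-ĥ = strip (tail λ)` removes the hook,
and `λ-ĉ = strip λ` removes the first column. -/
def eta : List ℕ → ℤ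
  | [] => 1
  | a :: t =>
      (-1) ^ (a + t.length) *
        (eta (strip t) + (-1) ^ a * ((a : ℤ) + t.length) * eta (strip (a :: t)))
  termination_by l => l.sum + l.length
  decreasing_by
  · have h1 := strip_measure t
    simp only [List.sum_cons, List.length_cons]
    omega
  · have h1 := strip_measure (a :: t)
    simp only [List.sum_cons, List.length_cons] at h1 ⊢
    omega

/-- `l` is (the list of parts of) a partition of `n`: weakly decreasing,
all parts positive, summing to `n`. -/
def IsPartition (n : ℕ) (l : List ℕ) : Prop :=
  l.Pairwise (· ≥ ·) ∧ (∀ x ∈ l, 0 < x) ∧ l.sum = n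

/-- The hook partition `(a, 1^(n-a))` of `n`. -/
def hookP (n a : ℕ) : List ℕ := a :: List.replicate (n - a) 1

lemma strip_single (m : ℕ) : strip [m + 2] = [m + 1] := by
  simp [strip]

lemma strip_pair (m : ℕ) : strip [m + 2, m + 2] = [m + 1, m + 1] := by
  simp [strip]

lemma eta_nil : eta [] = 1 := by rw [eta]

lemma eta_cons (a : ℕ) (t : List ℕ) : eta (a :: t) =
    (-1) ^ (a + t.length) *
        (eta (strip t) + (-1) ^ a * ((a : ℤ) + t.length) * eta (strip (a :: t))) := by
  rw [eta]

lemma strip_nil : strip [] = [] := rfl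

lemma neg_one_pow_cases (k : ℕ) : (-1 : ℤ) ^ k = 1 ∨ (-1 : ℤ) ^ k = -1 := by
  rcases Nat.even_or_odd k with h | h
  · left; exact h.neg_one_pow
  · right; exact h.neg_one_pow

lemma derange_succ (m : ℕ) : derange (m + 1) = ((m : ℤ) + 1) * derange m + (-1) ^ (m + 1) := by
  rw [derange]

lemma derange_one_le : ∀ m, 1 ≤ derange (m + 2) := by
  intro m
  induction m with
  | zero => decide
  | succ n ih =>
      rw [show n + 1 + 2 = (n + 2) + 1 from rfl, derange_succ]
      rcases neg_one_pow_cases (n + 2 + 1) with h | h <;> rw [h] <;> push_cast <;> nlinarith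

lemma derange_nonneg (m : ℕ) : 0 ≤ derange m := by
  match m with
  | 0 => decide
  | 1 => decide
  | (n + 2) => linarith [derange_one_le n]

lemma derange_ge (m : ℕ) : (m : ℤ) + 4 ≤ derange (m + 4) := by
  induction m with
  | zero => decide
  | succ n ih =>
      rw [show n + 1 + 4 = (n + 4) + 1 from rfl, derange_succ]
      rcases neg_one_pow_cases (n + 4 + 1) with h | h <;> rw [h] <;> push_cast <;> nlinarith

lemma eta_single (m : ℕ) : eta [m] = derange m := by
  induction m with
  | zero => rw [eta_cons]; norm_num [strip, eta_nil, derange]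
  | succ n ih =>
      rw [eta_cons, derange_succ]
      match n, ih with
      | 0, _ => norm_num [strip, eta_nil, derange]
      | (k + 1), ih =>
          rw [strip_single k, ih, strip_nil, eta_nil]
          simp only [List.length_nil, Nat.add_zero, Nat.cast_add, Nat.cast_ofNat,
            Nat.cast_zero, Nat.cast_one]
          rcases neg_one_pow_cases k with h | h <;>
            · rw [show ((-1:ℤ))^(k+2) = (-1)^k by ring, h]
              push_cast; ring

def gg : ℕ → ℤ
  | 0 => 1
  | 1 => 1
  | (n + 2) => ((n : ℤ) + 3) * gg (n + 1) - derange (n + 1)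

lemma eta_bb (n : ℕ) : eta [n + 1, n + 1] = (-1) ^ (n + 1) * gg (n + 1) := by
  induction n with
  | zero => rw [eta_cons]; norm_num [strip, eta_nil, gg]
  | succ m ih =>
      rw [show m + 1 + 1 = m + 2 from rfl, eta_cons, strip_pair, strip_single,
        eta_single (m + 1), ih, show gg (m + 2) = ((m:ℤ) + 3) * gg (m + 1) - derange (m + 1)
          from rfl]
      simp only [List.length_cons, List.length_nil, Nat.cast_add, Nat.cast_ofNat,
        Nat.cast_zero, Nat.cast_one]
      rcases neg_one_pow_cases m with h | h <;>
        · rw [show ((-1:ℤ))^(m+2+(0+1)) = -(-1)^m by ring, show ((-1:ℤ))^(m+2) = (-1)^m by ring,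
            show ((-1:ℤ))^(m+1) = -(-1)^m by ring, h]
          push_cast; ring

lemma neg_one_pow_bounds (k : ℕ) : -1 ≤ (-1 : ℤ) ^ k ∧ (-1 : ℤ) ^ k ≤ 1 := by
  rcases neg_one_pow_cases k with h | h <;> rw [h] <;> norm_num

lemma gg_succ_succ (n : ℕ) : gg (n + 2) = ((n : ℤ) + 3) * gg (n + 1) - derange (n + 1) := rfl

lemma gg_ge (n : ℕ) : derange (n + 2) + 1 ≤ gg (n + 2) := by
  induction n with
  | zero => norm_num [gg, derange]
  | succ m ih =>
      have h1 := derange_one_le m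
      have h2 := derange_succ (m + 2)
      have h3 := neg_one_pow_bounds (m + 2 + 1)
      rw [show m + 1 + 2 = (m + 1) + 2 from rfl, gg_succ_succ]
      push_cast at h2 ⊢
      nlinarith [h3.1, h3.2]

lemma gg_pos (n : ℕ) : 0 < gg (n + 1) := by
  match n with
  | 0 => decide
  | (m + 1) => have := gg_ge m; have := derange_nonneg (m + 2); linarith

lemma abs_eta_bb (m : ℕ) : |eta [m + 1, m + 1]| = gg (m + 1) := by
  rw [eta_bb, abs_mul, abs_pow, abs_neg, abs_one, one_pow, one_mul,
    abs_of_pos (gg_pos m)]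

lemma gg_step (n : ℕ)
    (h : gg (n + 4) ≤ derange (n + 5) + ((n : ℤ) + 1) * derange (n + 4)) :
    gg (n + 5) < derange (n + 6) + ((n : ℤ) + 2) * derange (n + 5) := by
  have hrec : gg (n + 5) = ((n : ℤ) + 6) * gg (n + 4) - derange (n + 4) := by
    rw [show n + 5 = (n + 3) + 2 from rfl, gg_succ_succ]; push_cast; ring_nf
  have h5 := derange_succ (n + 4)
  have h6 := derange_succ (n + 5)
  have e1 := neg_one_pow_bounds (n + 4 + 1)
  have e2 := neg_one_pow_bounds (n + 5 + 1)
  have hge := derange_ge n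
  have hnn := derange_nonneg (n + 4)
  push_cast at h5 h6 ⊢
  nlinarith [e1.1, e1.2, e2.1, e2.2, mul_nonneg (by positivity : (0:ℤ) ≤ (n:ℤ)) hnn]

lemma boundA (n : ℕ) : gg (n + 4) ≤ derange (n + 5) + ((n : ℤ) + 1) * derange (n + 4) := by
  induction n with
  | zero => norm_num [gg, derange]
  | succ m ih =>
      have := gg_step m ih
      push_cast
      push_cast at this
      linarith

lemma strictA (n : ℕ) : gg (n + 5) < derange (n + 6) + ((n : ℤ) + 2) * derange (n + 5) :=
  gg_step n (boundA n)

/-- For `b ≥ 1`, `|η_{(b,b)}| ≤ D_{b+1} + (b-1) D_b`; for `b ≥ 4`,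
`|η_{(b,b)}| ≤ D_{b+1} + (b-3) D_b` with equality iff `b = 4`. -/
theorem eta_abs_bb_upper (b : ℕ) (hb : 1 ≤ b) :
    |eta [b, b]| ≤ derange (b + 1) + ((b : ℤ) - 1) * derange b ∧
    (4 ≤ b →
      |eta [b, b]| ≤ derange (b + 1) + ((b : ℤ) - 3) * derange b ∧
      (|eta [b, b]| = derange (b + 1) + ((b : ℤ) - 3) * derange b ↔ b = 4)) := by
  obtain ⟨m, rfl⟩ : ∃ m, b = m + 1 := ⟨b - 1, by omega⟩
  rw [abs_eta_bb]
  constructor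
  · match m with
    | 0 => norm_num [gg, derange]
    | 1 => norm_num [gg, derange]
    | 2 => norm_num [gg, derange]
    | (k + 3) =>
        have h1 := boundA k
        have h2 := derange_nonneg (k + 4)
        push_cast
        push_cast at h1
        linarith
  · intro hb4
    obtain ⟨k, rfl⟩ : ∃ k, m = k + 3 := ⟨m - 3, by omega⟩
    have h1 := boundA k
    constructor
    · push_cast; push_cast at h1; linarith
    · constructor
      · intro heq
        by_contra hne
        obtain ⟨j, rfl⟩ : ∃ j, k = j + 1 := ⟨k - 1, by omega⟩
        have h2 := strictA j
        push_cast at heq h2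
        linarith
      · intro h4
        have hk : k = 0 := by omega
        subst hk
        norm_num [gg, derange]
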